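/- Minimum-time property of bang-then-cruise: among all absolutely continuous speed profiles v : [0,T] → ℝ with v(0) = v0, 0 ≤ v(t) ≤ vmax, and v̇(t) ≤ umax almost everywhere, satisfying ∫₀^T v(t) dt = L_CZ, the minimal terminal time T equals t_a + (L_CZ - d_a)/vmax where t_a = (vmax - v0)/umax and d_a = (vmax² - v0²)/(2·umax), assuming 0 ≤ v0 ≤ vmax, umax > 0, vmax > 0, and L_CZ ≥ d_a. -/

import Mathlib

/-- Admissible speed profile on `[0, T]`: continuous (absolute continuity),
initial speed `v0`, speeds in `[0, vmax]`, and acceleration bounded by `umax`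
(in the integrated form `v t - v s ≤ umax (t - s)`, which is equivalent to
`v̇ ≤ umax` a.e. for absolutely continuous `v`), covering distance `L_CZ`. -/
def Admissible (v0 vmax umax LCZ T : ℝ) (v : ℝ → ℝ) : Prop :=
  ContinuousOn v (Set.Icc 0 T) ∧ v 0 = v0 ∧
    (∀ t ∈ Set.Icc 0 T, 0 ≤ v t ∧ v t ≤ vmax) ∧
    (∀ s t, 0 ≤ s → s ≤ t → t ≤ T → v t - v s ≤ umax * (t - s)) ∧
    (∫ t in (0 : ℝ)..T, v t) = LCZ

noncomputable def uopt (v0 vmax umax t : ℝ) : ℝ := min (v0 + umax * t) vmax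

lemma uopt_cont (v0 vmax umax : ℝ) : Continuous (uopt v0 vmax umax) := by
  unfold uopt; fun_prop

lemma integ_lin (v0 umax a b : ℝ) :
    ∫ t in a..b, (v0 + umax * t) = v0*(b-a) + umax*(b^2-a^2)/2 := by
  have h : ∀ t ∈ Set.uIcc a b,
      HasDerivAt (fun t => v0*t + umax*t^2/2) (v0 + umax*t) t := by
    intro t _
    have h1 : HasDerivAt (fun t : ℝ => v0*t) v0 t := by
      simpa using (hasDerivAt_id t).const_mul v0
    have h2 : HasDerivAt (fun t : ℝ => umax*t^2/2) (umax*t) t := by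
      have h3 := ((hasDerivAt_pow 2 t).const_mul umax).div_const 2
      convert h3 using 1
      rfl; rfl; simp; ring
    exact h1.add h2
  rw [intervalIntegral.integral_eq_sub_of_hasDerivAt h
    ((by fun_prop : Continuous fun t : ℝ => v0 + umax * t).intervalIntegrable _ _)]
  ring

lemma integ_uopt_low (v0 vmax umax : ℝ) (hu : 0 < umax) {T : ℝ} (hT0 : 0 ≤ T)
    (hT : T ≤ (vmax - v0)/umax) :
    ∫ t in (0:ℝ)..T, uopt v0 vmax umax t = v0*T + umax*T^2/2 := by
  rw [intervalIntegral.integral_congr (g := fun t => v0 + umax * t)]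
  · rw [integ_lin]; ring
  · intro t ht
    rw [Set.uIcc_of_le hT0] at ht
    have h1 : v0 + umax * t ≤ vmax := by
      have := ht.2.trans hT
      rw [le_div_iff₀ hu] at this
      nlinarith [this]
    simp [uopt, min_eq_left h1]

lemma integ_uopt_high (v0 vmax umax : ℝ) (hu : 0 < umax) (hle : v0 ≤ vmax)
    {T : ℝ} (hT : (vmax - v0)/umax ≤ T) :
    ∫ t in (0:ℝ)..T, uopt v0 vmax umax t
      = (vmax^2 - v0^2)/(2*umax) + vmax * (T - (vmax - v0)/umax) := by
  set ta := (vmax - v0)/umax with hta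
  have hta0 : 0 ≤ ta := div_nonneg (by linarith) hu.le
  have hsplit := intervalIntegral.integral_add_adjacent_intervals
    (a := (0:ℝ)) (b := ta) (c := T)
    ((uopt_cont v0 vmax umax).intervalIntegrable (μ := MeasureTheory.volume) _ _)
    ((uopt_cont v0 vmax umax).intervalIntegrable (μ := MeasureTheory.volume) _ _)
  rw [← hsplit, integ_uopt_low v0 vmax umax hu hta0 le_rfl]
  have h2 : ∫ t in ta..T, uopt v0 vmax umax t = vmax * (T - ta) := by
    rw [intervalIntegral.integral_congr (g := fun _ => vmax)]
    · simp [smul_eq_mul, mul_comm]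
    · intro t ht
      rw [Set.uIcc_of_le hT] at ht
      have : vmax ≤ v0 + umax * t := by
        have := ht.1
        rw [hta, div_le_iff₀ hu] at this
        nlinarith
      simp [uopt, min_eq_right this]
  rw [h2, hta]
  field_simp
  ring

/-- Minimum-time property of the bang-then-cruise profile: the minimal time
to cover `L_CZ` is `T* = tₐ + (L_CZ - dₐ)/vmax` with `tₐ = (vmax - v0)/umax`
and `dₐ = (vmax² - v0²)/(2 umax)`: every admissible profile needs time at
least `T*`, and some admissible profile achieves exactly `T*`. -/
theorem stmt7 (v0 vmax umax LCZ : ℝ)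
    (hv0 : 0 ≤ v0) (hle : v0 ≤ vmax) (hu : 0 < umax) (hv : 0 < vmax)
    (hL : (vmax ^ 2 - v0 ^ 2) / (2 * umax) ≤ LCZ)
    (Tstar : ℝ)
    (hT : Tstar = (vmax - v0) / umax
        + (LCZ - (vmax ^ 2 - v0 ^ 2) / (2 * umax)) / vmax) :
    (∀ T : ℝ, 0 ≤ T → ∀ v : ℝ → ℝ,
        Admissible v0 vmax umax LCZ T v → Tstar ≤ T) ∧
      ∃ v : ℝ → ℝ, Admissible v0 vmax umax LCZ Tstar v := by
  set ta := (vmax - v0)/umax with hta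
  set da := (vmax^2 - v0^2)/(2*umax) with hda
  have hta0 : 0 ≤ ta := div_nonneg (by linarith) hu.le
  have hda0 : 0 ≤ da := div_nonneg (by nlinarith) (by linarith)
  constructor
  · intro T hT0 v ⟨hcont, hv00, hbd, hacc, hint⟩
    -- v t ≤ uopt t on [0,T]
    have hle' : ∀ t ∈ Set.Icc (0:ℝ) T, v t ≤ uopt v0 vmax umax t := by
      intro t ht
      have h1 := hacc 0 t le_rfl ht.1 ht.2
      rw [hv00] at h1
      have h2 := (hbd t ht).2
      simp only [uopt, le_min_iff]
      constructor
      · nlinarith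
      · exact h2
    have hmono : LCZ ≤ ∫ t in (0:ℝ)..T, uopt v0 vmax umax t := by
      rw [← hint]
      apply intervalIntegral.integral_mono_on hT0
      · exact ContinuousOn.intervalIntegrable (by rw [Set.uIcc_of_le hT0]; exact hcont)
      · exact (uopt_cont v0 vmax umax).intervalIntegrable _ _
      · exact hle'
    rcases le_or_gt ta T with hcase | hcase
    · rw [integ_uopt_high v0 vmax umax hu hle hcase] at hmono
      rw [hT]
      have : (LCZ - da)/vmax ≤ T - ta := by
        rw [div_le_iff₀ hv]
        nlinarith
      linarith
    · -- T < ta : contradiction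
      exfalso
      rw [integ_uopt_low v0 vmax umax hu hT0 hcase.le] at hmono
      have hTta : T < ta := hcase
      have : v0*T + umax*T^2/2 < da := by
        rw [hda]
        rw [hta, lt_div_iff₀ hu] at hTta
        rw [lt_div_iff₀ (by linarith : (0:ℝ) < 2*umax)]
        have h1 : 0 < vmax - v0 - umax*T := by linarith
        have h2 : 0 < vmax + v0 + umax*T := by nlinarith [mul_nonneg hu.le hT0]
        nlinarith [mul_pos h1 h2]
      linarith
  · refine ⟨uopt v0 vmax umax, ?_, ?_, ?_, ?_, ?_⟩
    · exact (uopt_cont v0 vmax umax).continuousOn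
    · simp [uopt, min_eq_left hle]
    · intro t ht
      constructor
      · simp only [uopt, le_min_iff]
        constructor
        · nlinarith [ht.1]
        · linarith
      · exact min_le_right _ _
    · intro s t hs hst htT
      simp only [uopt]
      have : min (v0 + umax * t) vmax ≤ min (v0 + umax * s) vmax + umax * (t - s) := by
        rcases le_total (v0 + umax * s) vmax with h | h
        · rw [min_eq_left h]
          exact le_trans (min_le_left _ _) (by linarith)
        · rw [min_eq_right h]
          exact le_trans (min_le_right _ _)
            (by nlinarith [mul_nonneg hu.le (sub_nonneg.2 hst)])
      linarith
    · have hTs : ta ≤ Tstar := by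
        rw [hT]
        have : 0 ≤ (LCZ - da)/vmax := div_nonneg (by linarith) hv.le
        linarith
      rw [integ_uopt_high v0 vmax umax hu hle hTs, hT, hta, hda]
      field_simp
      ring
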